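/- Every reduced ring is right Central McCoy. -/

import Mathlib

/-- A ring `R` is *right Central McCoy* if whenever nonzero polynomials
`f, g ∈ R[x]` satisfy `f * g = 0`, there is a nonzero `r ∈ R` with
every coefficient of `f` times `r` central in `R`. -/
def IsRightCentralMcCoy (R : Type*) [Ring R] : Prop :=
  ∀ f g : Polynomial R, f ≠ 0 → g ≠ 0 → f * g = 0 →
    ∃ r : R, r ≠ 0 ∧ ∀ i : ℕ, f.coeff i * r ∈ Set.center R

private lemma reduced_comm_zero {R : Type*} [Ring R] [IsReduced R] {a b : R}
    (h : a * b = 0) : b * a = 0 := by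
  have : (b * a) ^ 2 = 0 := by
    rw [sq]
    calc b * a * (b * a) = b * (a * b * a) := by simp [mul_assoc]
    _ = 0 := by rw [h]; simp
  exact IsReduced.eq_zero _ ⟨2, this⟩

theorem isReduced_isRightCentralMcCoy (R : Type*) [Ring R] [IsReduced R] :
    IsRightCentralMcCoy R := by
  intro f g hf hg hfg
  set m := g.natTrailingDegree with hm
  set b := g.trailingCoeff with hb
  have hb0 : b ≠ 0 := mt (fun h => Polynomial.trailingCoeff_eq_zero.mp h) hg
  have hbc : b = g.coeff m := rfl
  have key : ∀ i : ℕ, f.coeff i * b = 0 := by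
    intro i
    induction i using Nat.strong_induction_on with
    | _ i ih =>
      have h0 : (f * g).coeff (i + m) = 0 := by rw [hfg]; simp
      rw [Polynomial.coeff_mul] at h0
      have h1 : ∑ x ∈ Finset.HasAntidiagonal.antidiagonal (i + m), b * (f.coeff x.1 * g.coeff x.2) = 0 := by
        rw [← Finset.mul_sum, h0, mul_zero]
      have h2 : b * (f.coeff i * g.coeff m) = 0 := by
        rw [← h1]
        symm
        apply Finset.sum_eq_single (i, m)
        · rintro ⟨p, q⟩ hx hne
          simp only [Finset.HasAntidiagonal.mem_antidiagonal] at hx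
          rcases lt_trichotomy q m with hq | hq | hq
          · have : g.coeff q = 0 := Polynomial.coeff_eq_zero_of_lt_natTrailingDegree hq
            simp [this]
          · exfalso; apply hne; subst hq; simp at hx ⊢; omega
          · have hp : p < i := by omega
            have : b * f.coeff p = 0 := reduced_comm_zero (ih p hp)
            rw [← mul_assoc, this, zero_mul]
        · intro h; exact absurd (Finset.HasAntidiagonal.mem_antidiagonal.mpr (by simp)) h
      have : (f.coeff i * b) ^ 2 = 0 := by
        rw [sq]
        calc f.coeff i * b * (f.coeff i * b) = f.coeff i * (b * (f.coeff i * g.coeff m)) := by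
              simp [← hbc, mul_assoc]
        _ = 0 := by rw [h2, mul_zero]
      exact IsReduced.eq_zero _ ⟨2, this⟩
  exact ⟨b, hb0, fun i => by rw [key i]; exact Set.zero_mem_center⟩
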